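/- Let Y be a real random variable, not almost surely constant, with all exponential moments finite. Then Λ(λ) = log E[e^{λY}] is strictly convex on ℝ; in particular, the map λ ↦ E[Y e^{λY}]/E[e^{λY}] is strictly increasing. -/

import Mathlib

open MeasureTheory Real Filter

lemma stmt5_exp_abs_le (x : ℝ) : Real.exp |x| ≤ Real.exp x + Real.exp (-x) := by
  rcases abs_cases x with ⟨h, _⟩ | ⟨h, _⟩ <;> rw [h]
  · linarith [Real.exp_pos (-x)]
  · linarith [Real.exp_pos x]

lemma stmt5_abs_le (x : ℝ) : |x| ≤ Real.exp x + Real.exp (-x) := by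
  calc |x| ≤ Real.exp |x| := by
        nlinarith [Real.add_one_le_exp |x|]
    _ ≤ _ := stmt5_exp_abs_le x

lemma stmt5_int_mul {Ω : Type*} [MeasurableSpace Ω] (μ : Measure Ω) {Y : Ω → ℝ}
    (hY : Measurable Y)
    (hInt : ∀ l : ℝ, Integrable (fun ω => Real.exp (l * Y ω)) μ) (a : ℝ) :
    Integrable (fun ω => Y ω * Real.exp (a * Y ω)) μ := by
  refine ((hInt (a + 1)).add (hInt (a - 1))).mono'
    ((hY.mul ((hY.const_mul a).exp)).aestronglyMeasurable)
    (Filter.Eventually.of_forall fun ω => ?_)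
  rw [norm_mul, Real.norm_eq_abs, Real.norm_eq_abs, Real.abs_exp]
  calc |Y ω| * Real.exp (a * Y ω)
      ≤ (Real.exp (Y ω) + Real.exp (-Y ω)) * Real.exp (a * Y ω) := by
        have := stmt5_abs_le (Y ω)
        nlinarith [Real.exp_pos (a * Y ω)]
    _ = Real.exp ((a + 1) * Y ω) + Real.exp ((a - 1) * Y ω) := by
        rw [add_mul, ← Real.exp_add, ← Real.exp_add]
        congr 1 <;> ring_nf

lemma stmt5_int_abs_mul {Ω : Type*} [MeasurableSpace Ω] (μ : Measure Ω) {Y : Ω → ℝ}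
    (hY : Measurable Y)
    (hInt : ∀ l : ℝ, Integrable (fun ω => Real.exp (l * Y ω)) μ) (a : ℝ) :
    Integrable (fun ω => |Y ω| * Real.exp (a * Y ω)) μ := by
  have := (stmt5_int_mul μ hY hInt a).abs
  simpa [abs_mul, Real.abs_exp] using this

lemma stmt5_hasDeriv {Ω : Type*} [MeasurableSpace Ω] (μ : Measure Ω) [IsProbabilityMeasure μ]
    {Y : Ω → ℝ} (hY : Measurable Y)
    (hInt : ∀ l : ℝ, Integrable (fun ω => Real.exp (l * Y ω)) μ) (l : ℝ) :
    HasDerivAt (fun t : ℝ => ∫ ω, Real.exp (t * Y ω) ∂μ)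
      (∫ ω, Y ω * Real.exp (l * Y ω) ∂μ) l := by
  have h := hasDerivAt_integral_of_dominated_loc_of_deriv_le
    (F := fun t ω => Real.exp (t * Y ω))
    (F' := fun t ω => Y ω * Real.exp (t * Y ω))
    (bound := fun ω => |Y ω| * Real.exp ((l + 1) * Y ω) + |Y ω| * Real.exp ((l - 1) * Y ω))
    (μ := μ) (x₀ := l) (Metric.ball_mem_nhds l one_pos)
    (Filter.Eventually.of_forall fun t => ((hY.const_mul t).exp).aestronglyMeasurable)
    (hInt l)
    ((hY.mul ((hY.const_mul l).exp)).aestronglyMeasurable)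
    (Filter.Eventually.of_forall fun ω => ?_)
    (((stmt5_int_abs_mul μ hY hInt (l + 1))).add (stmt5_int_abs_mul μ hY hInt (l - 1)))
    (Filter.Eventually.of_forall fun ω t _ => by
      simpa [mul_comm] using (hasDerivAt_mul_const (Y ω)).exp)
  · exact h.2
  · intro t ht
    rw [Metric.mem_ball, Real.dist_eq] at ht
    rw [norm_mul, Real.norm_eq_abs, Real.norm_eq_abs, Real.abs_exp]
    have h1 : t * Y ω ≤ l * Y ω + |Y ω| := by
      have : (t - l) * Y ω ≤ |Y ω| := by
        calc (t - l) * Y ω ≤ |(t - l) * Y ω| := le_abs_self _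
          _ = |t - l| * |Y ω| := abs_mul _ _
          _ ≤ |Y ω| := by nlinarith [abs_nonneg (Y ω), ht.le]
      linarith
    have h2 : Real.exp (t * Y ω) ≤ Real.exp ((l + 1) * Y ω) + Real.exp ((l - 1) * Y ω) := by
      calc Real.exp (t * Y ω) ≤ Real.exp (l * Y ω + |Y ω|) := Real.exp_le_exp.2 h1
        _ = Real.exp (l * Y ω) * Real.exp |Y ω| := Real.exp_add _ _
        _ ≤ Real.exp (l * Y ω) * (Real.exp (Y ω) + Real.exp (-Y ω)) := by
            have h3 := stmt5_exp_abs_le (Y ω)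
            nlinarith [Real.exp_pos (l * Y ω)]
        _ = Real.exp ((l + 1) * Y ω) + Real.exp ((l - 1) * Y ω) := by
            rw [mul_add, ← Real.exp_add, ← Real.exp_add]
            congr 1 <;> ring_nf
    calc |Y ω| * Real.exp (t * Y ω)
        ≤ |Y ω| * (Real.exp ((l + 1) * Y ω) + Real.exp ((l - 1) * Y ω)) := by
          gcongr
      _ = |Y ω| * Real.exp ((l + 1) * Y ω) + |Y ω| * Real.exp ((l - 1) * Y ω) := by ring

lemma stmt5_key {Ω : Type*} [MeasurableSpace Ω] (μ : Measure Ω) [IsProbabilityMeasure μ]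
    {Y : Ω → ℝ} (hY : Measurable Y)
    (hInt : ∀ l : ℝ, Integrable (fun ω => Real.exp (l * Y ω)) μ)
    (hconst : ∀ c : ℝ, ¬ (Y =ᵐ[μ] fun _ => c)) {l1 l2 : ℝ} (h : l1 < l2) :
    (∫ ω, Y ω * Real.exp (l1 * Y ω) ∂μ) * (∫ ω, Real.exp (l2 * Y ω) ∂μ) <
      (∫ ω, Y ω * Real.exp (l2 * Y ω) ∂μ) * (∫ ω, Real.exp (l1 * Y ω) ∂μ) := by
  set G : Ω × Ω → ℝ := fun p =>
    (Y p.1 - Y p.2) *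
      (Real.exp (l2 * Y p.1 + l1 * Y p.2) - Real.exp (l1 * Y p.1 + l2 * Y p.2)) with hG
  have hGeq : G = fun p =>
      (Y p.1 * Real.exp (l2 * Y p.1)) * Real.exp (l1 * Y p.2)
        - (Y p.1 * Real.exp (l1 * Y p.1)) * Real.exp (l2 * Y p.2)
        - Real.exp (l2 * Y p.1) * (Y p.2 * Real.exp (l1 * Y p.2))
        + Real.exp (l1 * Y p.1) * (Y p.2 * Real.exp (l2 * Y p.2)) := by
    funext p
    simp only [hG]
    rw [Real.exp_add, Real.exp_add]
    ring
  have hG_int : Integrable G (μ.prod μ) := by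
    rw [hGeq]
    exact ((((stmt5_int_mul μ hY hInt l2).mul_prod (hInt l1)).sub
      ((stmt5_int_mul μ hY hInt l1).mul_prod (hInt l2))).sub
      ((hInt l2).mul_prod (stmt5_int_mul μ hY hInt l1))).add
      ((hInt l1).mul_prod (stmt5_int_mul μ hY hInt l2))
  have hG_nonneg : ∀ p, 0 ≤ G p := by
    intro p
    simp only [hG]
    rcases lt_trichotomy (Y p.1) (Y p.2) with hab | hab | hab
    · have h2 : Real.exp (l2 * Y p.1 + l1 * Y p.2) ≤ Real.exp (l1 * Y p.1 + l2 * Y p.2) :=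
        Real.exp_le_exp.2 (by nlinarith)
      nlinarith
    · simp only [hab, sub_self, zero_mul, le_refl]
    · apply mul_nonneg
      · linarith
      · have : l1 * Y p.1 + l2 * Y p.2 ≤ l2 * Y p.1 + l1 * Y p.2 := by nlinarith
        linarith [Real.exp_le_exp.2 this]
  have hS_meas : MeasurableSet {p : Ω × Ω | Y p.1 = Y p.2} :=
    measurableSet_eq_fun (hY.comp measurable_fst) (hY.comp measurable_snd)
  have hS_sub : {p : Ω × Ω | Y p.1 = Y p.2}ᶜ ⊆ Function.support G := by
    intro p hp
    simp only [Set.mem_compl_iff, Set.mem_setOf_eq] at hp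
    apply mul_ne_zero
    · exact sub_ne_zero.2 hp
    · refine sub_ne_zero.2 fun heq => ?_
      have := Real.exp_injective heq
      apply hp
      nlinarith [this]
  have hS_pos : 0 < (μ.prod μ) {p : Ω × Ω | Y p.1 = Y p.2}ᶜ := by
    rcases (zero_le : (0 : ENNReal) ≤ (μ.prod μ) {p : Ω × Ω | Y p.1 = Y p.2}ᶜ).lt_or_eq with hlt | heq
    · exact hlt
    exfalso
    have hnull : μ.prod μ {p : Ω × Ω | Y p.1 = Y p.2}ᶜ = 0 := heq.symm
    rw [Measure.measure_prod_null hS_meas.compl] at hnull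
    have hne : (ae μ).NeBot := ae_neBot.2 (IsProbabilityMeasure.ne_zero μ)
    obtain ⟨ω, hω⟩ := hnull.exists
    apply hconst (Y ω)
    have : μ {ω' | ¬ Y ω' = Y ω} = 0 := by
      convert hω using 2
      ext ω'
      simp only [Set.mem_setOf_eq, Set.mem_preimage, Set.mem_compl_iff]
      exact ⟨fun h1 h2 => h1 h2.symm, fun h1 h2 => h1 h2.symm⟩
      rfl
    exact this
  have hG_pos : 0 < ∫ p, G p ∂(μ.prod μ) := by
    rw [integral_pos_iff_support_of_nonneg hG_nonneg hG_int]
    exact lt_of_lt_of_le hS_pos (measure_mono hS_sub)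
  have hG_val : ∫ p, G p ∂(μ.prod μ) =
      (∫ ω, Y ω * Real.exp (l2 * Y ω) ∂μ) * (∫ ω, Real.exp (l1 * Y ω) ∂μ)
        - (∫ ω, Y ω * Real.exp (l1 * Y ω) ∂μ) * (∫ ω, Real.exp (l2 * Y ω) ∂μ)
        - (∫ ω, Real.exp (l2 * Y ω) ∂μ) * (∫ ω, Y ω * Real.exp (l1 * Y ω) ∂μ)
        + (∫ ω, Real.exp (l1 * Y ω) ∂μ) * (∫ ω, Y ω * Real.exp (l2 * Y ω) ∂μ) := by
    have i1 : Integrable (fun p : Ω × Ω => (Y p.1 * Real.exp (l2 * Y p.1)) * Real.exp (l1 * Y p.2)) (μ.prod μ) :=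
      (stmt5_int_mul μ hY hInt l2).mul_prod (hInt l1)
    have i2 : Integrable (fun p : Ω × Ω => (Y p.1 * Real.exp (l1 * Y p.1)) * Real.exp (l2 * Y p.2)) (μ.prod μ) :=
      (stmt5_int_mul μ hY hInt l1).mul_prod (hInt l2)
    have i3 : Integrable (fun p : Ω × Ω => Real.exp (l2 * Y p.1) * (Y p.2 * Real.exp (l1 * Y p.2))) (μ.prod μ) :=
      (hInt l2).mul_prod (stmt5_int_mul μ hY hInt l1)
    have i4 : Integrable (fun p : Ω × Ω => Real.exp (l1 * Y p.1) * (Y p.2 * Real.exp (l2 * Y p.2))) (μ.prod μ) :=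
      (hInt l1).mul_prod (stmt5_int_mul μ hY hInt l2)
    have i12 : Integrable (fun p : Ω × Ω => (Y p.1 * Real.exp (l2 * Y p.1)) * Real.exp (l1 * Y p.2)
        - (Y p.1 * Real.exp (l1 * Y p.1)) * Real.exp (l2 * Y p.2)) (μ.prod μ) := i1.sub i2
    have i123 : Integrable (fun p : Ω × Ω => (Y p.1 * Real.exp (l2 * Y p.1)) * Real.exp (l1 * Y p.2)
        - (Y p.1 * Real.exp (l1 * Y p.1)) * Real.exp (l2 * Y p.2)
        - Real.exp (l2 * Y p.1) * (Y p.2 * Real.exp (l1 * Y p.2))) (μ.prod μ) := i12.sub i3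
    rw [hGeq]
    beta_reduce
    rw [integral_add i123 i4, integral_sub i12 i3, integral_sub i1 i2,
      integral_prod_mul (fun ω => Y ω * Real.exp (l2 * Y ω)) (fun ω => Real.exp (l1 * Y ω)),
      integral_prod_mul (fun ω => Y ω * Real.exp (l1 * Y ω)) (fun ω => Real.exp (l2 * Y ω)),
      integral_prod_mul (fun ω => Real.exp (l2 * Y ω)) (fun ω => Y ω * Real.exp (l1 * Y ω)),
      integral_prod_mul (fun ω => Real.exp (l1 * Y ω)) (fun ω => Y ω * Real.exp (l2 * Y ω))]
  rw [hG_val] at hG_pos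
  nlinarith [hG_pos,
    mul_comm (∫ ω, Real.exp (l2 * Y ω) ∂μ) (∫ ω, Y ω * Real.exp (l1 * Y ω) ∂μ),
    mul_comm (∫ ω, Real.exp (l1 * Y ω) ∂μ) (∫ ω, Y ω * Real.exp (l2 * Y ω) ∂μ)]

/-- If `Y` has all exponential moments finite and is not a.s. constant, then
`Λ(λ) = log E[e^{λY}]` is strictly convex on `ℝ`; in particular
`λ ↦ E[Y e^{λY}]/E[e^{λY}]` is strictly increasing. -/
theorem stmt_5 {Ω : Type*} [MeasurableSpace Ω] (μ : Measure Ω) [IsProbabilityMeasure μ]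
    (Y : Ω → ℝ) (hY : Measurable Y)
    (hInt : ∀ l : ℝ, Integrable (fun ω => Real.exp (l * Y ω)) μ)
    (hconst : ∀ c : ℝ, ¬ (Y =ᵐ[μ] fun _ => c)) :
    StrictConvexOn ℝ Set.univ (fun l : ℝ => Real.log (∫ ω, Real.exp (l * Y ω) ∂μ)) ∧
    StrictMono (fun l : ℝ =>
      (∫ ω, Y ω * Real.exp (l * Y ω) ∂μ) / ∫ ω, Real.exp (l * Y ω) ∂μ) := by
  have hBpos : ∀ l : ℝ, 0 < ∫ ω, Real.exp (l * Y ω) ∂μ := fun l =>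
    integral_exp_pos (hInt l)
  have hmono : StrictMono (fun l : ℝ =>
      (∫ ω, Y ω * Real.exp (l * Y ω) ∂μ) / ∫ ω, Real.exp (l * Y ω) ∂μ) := by
    intro l1 l2 h
    rw [div_lt_div_iff₀ (hBpos l1) (hBpos l2)]
    exact stmt5_key μ hY hInt hconst h
  refine ⟨?_, hmono⟩
  have hd : ∀ l : ℝ, HasDerivAt (fun l : ℝ => Real.log (∫ ω, Real.exp (l * Y ω) ∂μ))
      ((∫ ω, Y ω * Real.exp (l * Y ω) ∂μ) / ∫ ω, Real.exp (l * Y ω) ∂μ) l := fun l =>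
    (stmt5_hasDeriv μ hY hInt l).log (ne_of_gt (hBpos l))
  apply StrictMono.strictConvexOn_univ_of_deriv
  · exact continuous_iff_continuousAt.2 fun l => (hd l).continuousAt
  · have : deriv (fun l : ℝ => Real.log (∫ ω, Real.exp (l * Y ω) ∂μ)) =
        fun l : ℝ => (∫ ω, Y ω * Real.exp (l * Y ω) ∂μ) / ∫ ω, Real.exp (l * Y ω) ∂μ :=
      funext fun l => (hd l).deriv
    rw [this]
    exact hmono
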